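/- Let E be a nonempty set equipped with the power-set σ-algebra. Define δ_#(B) = 1 for nonempty B and δ_#(∅) = 0, and τ(B) = ∞ for nonempty B and τ(∅) = 0; both are σ-maxitive measures and δ_# is absolutely continuous with respect to τ (δ_#(B) ≤ ∞ * τ(B) whenever τ(B) < ∞). Nevertheless, there exists no map c : E → [0,∞] such that δ_#(B) = ⨆_{t∈(0,∞)} t * τ(B ∩ {c > t}) for all B ⊆ E; i.e., δ_# has no density with respect to τ for the Shilkret integral. -/

import Mathlib

open scoped ENNReal
open Set Classical

/-- A σ-maxitive measure: vanishes on `∅` and turns countable unions of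
measurable sets into suprema. -/
def SigmaMaxitive {E : Type*} [MeasurableSpace E] (ν : Set E → ℝ≥0∞) : Prop :=
  ν ∅ = 0 ∧ ∀ B : ℕ → Set E, (∀ n, MeasurableSet (B n)) →
    ν (⋃ n, B n) = ⨆ n, ν (B n)

/-- `δ_#`: value `1` on nonempty sets, `0` on the empty set. -/
noncomputable def deltaSharp (E : Type*) : Set E → ℝ≥0∞ :=
  fun B => if B = ∅ then 0 else 1

/-- `τ`: value `∞` on nonempty sets, `0` on the empty set. -/
noncomputable def infDeltaSharp (E : Type*) : Set E → ℝ≥0∞ :=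
  fun B => if B = ∅ then 0 else ⊤

lemma indic_maxitive {E : Type*} [MeasurableSpace E] (v : ℝ≥0∞) :
    SigmaMaxitive (fun B : Set E => if B = ∅ then 0 else v) := by
  constructor
  · simp
  · intro B _
    by_cases h : ∀ n, B n = ∅
    · have hU : (⋃ n, B n) = ∅ := by simp [h]
      simp [hU, h]
    · push_neg at h
      obtain ⟨n, hn⟩ := h
      have hU : (⋃ n, B n) ≠ ∅ := by
        intro hU
        exact hn.ne_empty (eq_empty_of_subset_empty (hU ▸ subset_iUnion B n))
      simp only [hU, if_neg]
      apply le_antisymm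
      · exact le_trans (by simp [hn.ne_empty]) (le_iSup (fun n => if B n = ∅ then 0 else v) n)
      · exact iSup_le fun m => by split <;> simp

theorem deltaSharp_no_density (E : Type*) [Nonempty E] :
    @SigmaMaxitive E ⊤ (deltaSharp E) ∧
    @SigmaMaxitive E ⊤ (infDeltaSharp E) ∧
    (∀ B : Set E, infDeltaSharp E B < ⊤ →
      deltaSharp E B ≤ ⊤ * infDeltaSharp E B) ∧
    ¬ ∃ c : E → ℝ≥0∞, ∀ B : Set E,
      deltaSharp E B =
        ⨆ t ∈ Ioo (0 : ℝ≥0∞) ⊤, t * infDeltaSharp E (B ∩ {x | t < c x}) := by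
  refine ⟨@indic_maxitive E ⊤ 1, @indic_maxitive E ⊤ ⊤, ?_, ?_⟩
  · intro B hB
    have : B = ∅ := by
      by_contra h
      simp [infDeltaSharp, h] at hB
    simp [this, deltaSharp]
  · rintro ⟨c, hc⟩
    obtain ⟨x⟩ := ‹Nonempty E›
    have hx := hc {x}
    have hL : deltaSharp E {x} = 1 := by
      simp [deltaSharp, Set.singleton_nonempty x |>.ne_empty]
    rw [hL] at hx
    rcases eq_or_lt_of_le (zero_le : 0 ≤ c x) with h0 | h0
    · have : ∀ t ∈ Ioo (0 : ℝ≥0∞) ⊤, t * infDeltaSharp E ({x} ∩ {y | t < c y}) = 0 := by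
        intro t ht
        have : ({x} : Set E) ∩ {y | t < c y} = ∅ := by
          ext y
          simp only [mem_inter_iff, mem_singleton_iff, mem_setOf_eq, mem_empty_iff_false,
            iff_false, not_and]
          rintro rfl
          rw [← h0]
          exact not_lt_of_ge ht.1.le
        simp [this, infDeltaSharp]
      rw [iSup_congr fun t => iSup_congr (this t)] at hx
      simp at hx
    · obtain ⟨t, ht0, htc⟩ := exists_between h0
      have htop : t < ⊤ := lt_of_lt_of_le htc le_top
      have hne : ({x} : Set E) ∩ {y | t < c y} ≠ ∅ := by
        intro h
        have : x ∈ ({x} : Set E) ∩ {y | t < c y} := ⟨rfl, htc⟩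
        simp [h] at this
      have : t * infDeltaSharp E ({x} ∩ {y | t < c y}) = ⊤ := by
        simp [infDeltaSharp, hne, ENNReal.mul_top ht0.ne']
      have hle : (⊤ : ℝ≥0∞) ≤ 1 := by
        rw [hx]
        calc (⊤ : ℝ≥0∞) = t * infDeltaSharp E ({x} ∩ {y | t < c y}) := this.symm
          _ ≤ _ := le_biSup (fun t => t * infDeltaSharp E ({x} ∩ {y | t < c y})) (show t ∈ Ioo (0:ℝ≥0∞) ⊤ from ⟨ht0, htop⟩)
      simp at hle
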